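/- For every integer t ≥ 0 and every R_{2t} ∈ 𝒫_{2t}, one has Δ^{t+1}(x² R_{2t}) = 2(t+1)(M + 2t) Δ^t(R_{2t}). -/

import Mathlib

open scoped TensorProduct
open MvPolynomial

set_option maxHeartbeats 1000000
set_option synthInstance.maxHeartbeats 400000

noncomputable section

variable (m n : ℕ)

/-- The Grassmann algebra Λ_{2n} on `2n` anticommuting generators. -/
abbrev Grass (n : ℕ) := ExteriorAlgebra ℝ (Fin (2*n) → ℝ)

/-- The algebra of super-polynomials 𝒫 = ℝ[x_1,…,x_m] ⊗ Λ_{2n}. -/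
abbrev SuperPoly (m n : ℕ) := MvPolynomial (Fin m) ℝ ⊗[ℝ] Grass n

/-- The fermionic generator x`_i. -/
def fgen (i : Fin (2*n)) : Grass n :=
  ExteriorAlgebra.ι ℝ (Pi.single i (1:ℝ))

/-- The fermionic partial derivative ∂_{x`_i}, the odd derivation with
∂_{x`_i}(x`_j) = δ_{ij}: contraction with the i-th dual basis vector. -/
def fpderiv (i : Fin (2*n)) : Grass n →ₗ[ℝ] Grass n :=
  CliffordAlgebra.contractLeft (LinearMap.proj i)

/-- The fermionic Laplace operator on Λ_{2n}. -/
def lapF : Grass n →ₗ[ℝ] Grass n :=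
  (4:ℝ) • ∑ j : Fin n,
    (fpderiv n ⟨2*j.1, by omega⟩) ∘ₗ (fpderiv n ⟨2*j.1+1, by omega⟩)

/-- The bosonic Laplace operator Δ_b = −∑ ∂_{x_j}² on ℝ[x_1,…,x_m]. -/
def lapB : MvPolynomial (Fin m) ℝ →ₗ[ℝ] MvPolynomial (Fin m) ℝ :=
  - ∑ j : Fin m, (pderiv j).toLinearMap ∘ₗ (pderiv j).toLinearMap

/-- The super Laplace operator Δ = Δ_b + Δ_f on 𝒫. -/
def lap : SuperPoly m n →ₗ[ℝ] SuperPoly m n :=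
  LinearMap.rTensor (Grass n) (lapB m) + LinearMap.lTensor (MvPolynomial (Fin m) ℝ) (lapF n)

/-- x̲² = −∑ x_j². -/
def rb2 : MvPolynomial (Fin m) ℝ := - ∑ j : Fin m, (X j)^2

/-- x`² = ∑_{j=1}^n x`_{2j−1} x`_{2j}. -/
def rf2 : Grass n := ∑ j : Fin n, fgen n ⟨2*j.1, by omega⟩ * fgen n ⟨2*j.1+1, by omega⟩

/-- The generalized norm squared x² = x̲² + x`² as an element of 𝒫. -/
def r2 : SuperPoly m n := (rb2 m) ⊗ₜ 1 + 1 ⊗ₜ (rf2 n)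

/-- The grade-`i` part of the Grassmann algebra. -/
def fgrade (i : ℕ) : Submodule ℝ (Grass n) :=
  (LinearMap.range (ExteriorAlgebra.ι ℝ (M := Fin (2*n) → ℝ)))^i

/-- The space 𝒫_k of super-polynomials homogeneous of total degree k. -/
def P (k : ℕ) : Submodule ℝ (SuperPoly m n) :=
  ⨆ i : Fin (k+1), Submodule.map₂ (TensorProduct.mk ℝ _ _)
    (homogeneousSubmodule (Fin m) ℝ (k - i.1)) (fgrade n i.1)

/-- The space ℋ_k of spherical harmonics of degree k. -/
def H (k : ℕ) : Submodule ℝ (SuperPoly m n) :=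
  P m n k ⊓ LinearMap.ker (lap m n)

/-- The super-dimension M = m − 2n. -/
def sdim : ℤ := (m : ℤ) - 2*n

namespace Helper

lemma single_add_sub {m : ℕ} (d : Fin m →₀ ℕ) (j : Fin m) (h : d j ≠ 0) :
    Finsupp.single j 1 + (d - Finsupp.single j 1) = d := by
  ext i
  simp only [Finsupp.add_apply, Finsupp.tsub_apply, Finsupp.single_apply]
  by_cases hij : j = i
  · subst hij; simp; omega
  · simp [hij]

lemma X_mul_pderiv_monomial {m : ℕ} (d : Fin m →₀ ℕ) (c : ℝ) (j : Fin m) :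
    X j * pderiv j (monomial d c) = (d j : ℝ) • monomial d c := by
  rw [pderiv_monomial]
  rcases Nat.eq_zero_or_pos (d j) with h0 | h0
  · simp [h0]
  · rw [show (X j : MvPolynomial (Fin m) ℝ) = X j ^ 1 from (pow_one _).symm,
      ← monomial_single_add, single_add_sub d j (by omega), smul_monomial]
    congr 1
    rw [smul_eq_mul, mul_comm]

lemma eulerB {m a : ℕ} (p : MvPolynomial (Fin m) ℝ)
    (hp : p ∈ homogeneousSubmodule (Fin m) ℝ a) :
    ∑ j : Fin m, X j * pderiv j p = (a : ℝ) • p := by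
  conv_lhs => rw [← p.support_sum_monomial_coeff]
  conv_rhs => rw [← p.support_sum_monomial_coeff]
  rw [Finset.smul_sum]
  simp only [map_sum, Finset.mul_sum]
  rw [Finset.sum_comm]
  refine Finset.sum_congr rfl fun d hd => ?_
  simp only [X_mul_pderiv_monomial]
  rw [← Finset.sum_smul]
  congr 1
  have hdeg : d.degree = a := by
    have := (mem_homogeneousSubmodule _ _).mp hp (mem_support_iff.mp hd)
    rw [Finsupp.degree_eq_weight_one]; exact this
  rw [← Nat.cast_sum]
  norm_cast
  rw [← hdeg, Finsupp.degree_apply]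
  exact (Finset.sum_subset (Finset.subset_univ _) (by
    intro x _ hx
    simpa using Finsupp.notMem_support_iff.mp hx)).symm

lemma pderiv_rb2 {m : ℕ} (j : Fin m) :
    pderiv j (rb2 m) = C (-2) * X j := by
  rw [rb2, map_neg, map_sum]
  rw [Finset.sum_eq_single j]
  · rw [pderiv_pow, pderiv_X_self]
    rw [show ((2:ℕ):MvPolynomial (Fin m) ℝ) = C 2 by push_cast; rfl, map_neg]
    ring
  · intro i _ hij
    rw [pderiv_pow, pderiv_X_of_ne hij]; ring
  · simp

lemma commB {m : ℕ} (p : MvPolynomial (Fin m) ℝ) :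
    lapB m (rb2 m * p) = rb2 m * lapB m p + C (2*(m:ℝ)) * p
      + C 4 * (∑ j : Fin m, X j * pderiv j p) := by
  simp only [lapB, LinearMap.neg_apply, LinearMap.coe_sum, Finset.sum_apply,
    LinearMap.comp_apply, Derivation.coeFn_coe]
  have key : ∀ j : Fin m, pderiv j (pderiv j (rb2 m * p))
      = rb2 m * pderiv j (pderiv j p) - C 2 * p - C 4 * (X j * pderiv j p) := by
    intro j
    have h2 : (pderiv j) (2 : MvPolynomial (Fin m) ℝ) = 0 := by
      rw [show (2:MvPolynomial (Fin m) ℝ) = C 2 from (map_ofNat C 2).symm, pderiv_C]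
    simp only [pderiv_mul, pderiv_rb2, pderiv_C_mul, pderiv_X_self, map_add]
    ring_nf
    simp only [map_neg, map_ofNat, h2]
    ring
  rw [Finset.sum_congr rfl fun j _ => key j]
  rw [Finset.sum_sub_distrib, Finset.sum_sub_distrib, ← Finset.mul_sum,
    ← Finset.mul_sum, Finset.sum_const, Finset.card_univ, Fintype.card_fin,
    nsmul_eq_mul]
  have : ((m : MvPolynomial (Fin m) ℝ)) = C (m:ℝ) := by
    simp [C_eq_smul_one]
  rw [this, map_mul]
  simp only [Finset.mul_sum, mul_neg, neg_mul]
  ring_nf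

end Helper

namespace Helper2

lemma fpderiv_fgen_mul {n : ℕ} (i j : Fin (2*n)) (g : Grass n) :
    fpderiv n i (fgen n j * g) = (if i = j then g else 0) - fgen n j * fpderiv n i g := by
  rw [fpderiv, fgen, CliffordAlgebra.contractLeft_ι_mul]
  congr 1
  rw [LinearMap.proj_apply, Pi.single_apply]
  by_cases h : i = j <;> simp [h]

lemma fpderiv_algebraMap {n : ℕ} (i : Fin (2*n)) (r : ℝ) :
    fpderiv n i (algebraMap ℝ (Grass n) r) = 0 := by
  rw [fpderiv]
  exact CliffordAlgebra.contractLeft_algebraMap _ _ _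

lemma fgen_anticomm {n : ℕ} (i j : Fin (2*n)) :
    fgen n i * fgen n j = -(fgen n j * fgen n i) := by
  rw [fgen, fgen]
  exact eq_neg_of_add_eq_zero_left (ExteriorAlgebra.ι_add_mul_swap _ _)

lemma sum_range_two_mul {A : Type*} [AddCommMonoid A] (g : ℕ → A) (n : ℕ) :
    ∑ i ∈ Finset.range (2*n), g i = ∑ k ∈ Finset.range n, (g (2*k) + g (2*k+1)) := by
  induction n with
  | zero => simp
  | succ n ih =>
    rw [show 2*(n+1) = 2*n+1+1 by ring, Finset.sum_range_succ, Finset.sum_range_succ,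
      Finset.sum_range_succ, ih, add_assoc]

lemma sum_fin_two_mul {A : Type*} [AddCommMonoid A] (n : ℕ) (f : Fin (2*n) → A) :
    ∑ i, f i = ∑ k : Fin n, (f ⟨2*k.1, by omega⟩ + f ⟨2*k.1+1, by omega⟩) := by
  set g : ℕ → A := fun i => if h : i < 2*n then f ⟨i, h⟩ else 0 with hg
  have h1 : ∑ i, f i = ∑ i ∈ Finset.range (2*n), g i := by
    rw [← Fin.sum_univ_eq_sum_range]
    exact Finset.sum_congr rfl fun i _ => by simp [hg, i.isLt]
  have h2 : ∑ k : Fin n, (f ⟨2*k.1, by omega⟩ + f ⟨2*k.1+1, by omega⟩)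
      = ∑ k ∈ Finset.range n, (g (2*k) + g (2*k+1)) := by
    rw [← Fin.sum_univ_eq_sum_range]
    refine Finset.sum_congr rfl fun k _ => ?_
    have hk1 : 2*(k:ℕ) < 2*n := by omega
    have hk2 : 2*(k:ℕ)+1 < 2*n := by omega
    simp [hg, hk1, hk2]
  rw [h1, h2, sum_range_two_mul]

/-- The fermionic Euler operator. -/
def EF (n : ℕ) : Grass n →ₗ[ℝ] Grass n :=
  ∑ i : Fin (2*n), (LinearMap.mulLeft ℝ (fgen n i)) ∘ₗ fpderiv n i

lemma EF_apply {n : ℕ} (g : Grass n) :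
    EF n g = ∑ i : Fin (2*n), fgen n i * fpderiv n i g := by
  simp [EF]

lemma single_eq_sum {n : ℕ} (v : Fin (2*n) → ℝ) :
    ∑ i : Fin (2*n), v i • (Pi.single i (1:ℝ) : Fin (2*n) → ℝ) = v := by
  have : ∀ i : Fin (2*n), v i • (Pi.single i (1:ℝ) : Fin (2*n) → ℝ) = Pi.single i (v i) := by
    intro i
    rw [← Pi.single_smul, smul_eq_mul, mul_one]
  simp_rw [this]
  exact Finset.univ_sum_single v

lemma eulerF {n b : ℕ} (g : Grass n) (hg : g ∈ fgrade n b) : EF n g = (b:ℝ) • g := by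
  rw [fgrade] at hg
  induction hg using Submodule.pow_induction_on_left' with
  | algebraMap r =>
    rw [EF_apply]
    simp [fpderiv_algebraMap]
  | add x y i hx hy ihx ihy =>
    rw [map_add, ihx, ihy, smul_add]
  | mem_mul u hu i x hx ih =>
    obtain ⟨v, rfl⟩ := hu
    rw [EF_apply]
    have expand : ∀ j : Fin (2*n),
        fgen n j * fpderiv n j (ExteriorAlgebra.ι ℝ v * x)
        = v j • (fgen n j * x) - fgen n j * (ExteriorAlgebra.ι ℝ v * fpderiv n j x) := by
      intro j
      rw [fpderiv, CliffordAlgebra.contractLeft_ι_mul]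
      rw [mul_sub, mul_smul_comm]
      rfl
    simp_rw [expand, Finset.sum_sub_distrib]
    have first : ∑ j : Fin (2*n), v j • (fgen n j * x) = ExteriorAlgebra.ι ℝ v * x := by
      have : ∀ j : Fin (2*n), v j • (fgen n j * x) = (v j • fgen n j) * x := by
        intro j; rw [smul_mul_assoc]
      simp_rw [this, ← Finset.sum_mul]
      congr 1
      simp_rw [fgen, ← map_smul, ← map_sum, single_eq_sum]
    have second : ∀ j : Fin (2*n),
        fgen n j * (ExteriorAlgebra.ι ℝ v * fpderiv n j x)
        = -(ExteriorAlgebra.ι ℝ v * (fgen n j * fpderiv n j x)) := by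
      intro j
      rw [← mul_assoc, ← mul_assoc, fgen, ← neg_mul]
      congr 2
      exact (neg_eq_iff_eq_neg.mpr (eq_neg_of_add_eq_zero_left
        (ExteriorAlgebra.ι_add_mul_swap _ _))).symm
    simp_rw [second, Finset.sum_neg_distrib, sub_neg_eq_add, ← Finset.mul_sum]
    rw [← EF_apply, ih, mul_smul_comm]
    push_cast
    rw [add_smul, one_smul, first]
    abel

lemma Djk {n : ℕ} (j k : Fin n) (g : Grass n) :
    fpderiv n ⟨2*j.1, by omega⟩ (fpderiv n ⟨2*j.1+1, by omega⟩
      (fgen n ⟨2*k.1, by omega⟩ * fgen n ⟨2*k.1+1, by omega⟩ * g))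
    = (if j = k then (fgen n ⟨2*k.1, by omega⟩ * fpderiv n ⟨2*k.1, by omega⟩ g
        + fgen n ⟨2*k.1+1, by omega⟩ * fpderiv n ⟨2*k.1+1, by omega⟩ g - g) else 0)
      + fgen n ⟨2*k.1, by omega⟩ * (fgen n ⟨2*k.1+1, by omega⟩ *
        (fpderiv n ⟨2*j.1, by omega⟩ (fpderiv n ⟨2*j.1+1, by omega⟩ g))) := by
  by_cases hjk : j = k
  · subst hjk
    have h1 : ((⟨2*j.1+1, by omega⟩ : Fin (2*n)) = ⟨2*j.1, by omega⟩) = False :=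
      eq_false (by simp only [ne_eq, Fin.mk.injEq]; omega)
    have h2 : ((⟨2*j.1+1, by omega⟩ : Fin (2*n)) = ⟨2*j.1+1, by omega⟩) = True :=
      eq_true rfl
    have h3 : ((⟨2*j.1, by omega⟩ : Fin (2*n)) = ⟨2*j.1, by omega⟩) = True :=
      eq_true rfl
    have h4 : ((⟨2*j.1, by omega⟩ : Fin (2*n)) = ⟨2*j.1+1, by omega⟩) = False :=
      eq_false (by simp only [ne_eq, Fin.mk.injEq]; omega)
    simp only [mul_assoc, fpderiv_fgen_mul, h1, h2, h3, h4, if_true, if_false,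
      map_sub, map_neg, mul_sub, mul_neg, sub_zero, zero_sub, neg_neg, neg_sub,
      map_zero, mul_zero, if_pos rfl]
    abel
  · have h1 : ((⟨2*j.1+1, by omega⟩ : Fin (2*n)) = ⟨2*k.1, by omega⟩) = False :=
      eq_false (by simp only [ne_eq, Fin.mk.injEq]; omega)
    have h2 : ((⟨2*j.1+1, by omega⟩ : Fin (2*n)) = ⟨2*k.1+1, by omega⟩) = False :=
      eq_false (by simp only [ne_eq, Fin.mk.injEq]; exact fun h => hjk (Fin.ext (by omega)))
    have h3 : ((⟨2*j.1, by omega⟩ : Fin (2*n)) = ⟨2*k.1, by omega⟩) = False :=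
      eq_false (by simp only [ne_eq, Fin.mk.injEq]; exact fun h => hjk (Fin.ext (by omega)))
    have h4 : ((⟨2*j.1, by omega⟩ : Fin (2*n)) = ⟨2*k.1+1, by omega⟩) = False :=
      eq_false (by simp only [ne_eq, Fin.mk.injEq]; omega)
    simp only [mul_assoc, fpderiv_fgen_mul, h1, h2, h3, h4, if_false, if_neg hjk,
      map_sub, map_neg, mul_sub, mul_neg, sub_zero, zero_sub, neg_neg, neg_sub,
      map_zero, mul_zero]
    abel

lemma lapF_expand {n : ℕ} (x : Grass n) :
    lapF n x = (4:ℝ) • ∑ j : Fin n,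
      fpderiv n ⟨2*j.1, by omega⟩ (fpderiv n ⟨2*j.1+1, by omega⟩ x) := by
  rw [lapF]
  simp

set_option maxHeartbeats 1000000 in
lemma commF {n : ℕ} (g : Grass n) :
    lapF n (rf2 n * g) = rf2 n * lapF n g + (4:ℝ) • EF n g - (4*(n:ℝ)) • g := by
  rw [lapF_expand (rf2 n * g)]
  have hrg : rf2 n * g = ∑ k : Fin n,
      fgen n ⟨2*k.1, by omega⟩ * (fgen n ⟨2*k.1+1, by omega⟩ * g) := by
    rw [rf2, Finset.sum_mul]
    simp_rw [mul_assoc]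
  rw [hrg]
  simp_rw [map_sum]
  have step : ∀ j : Fin n, ∑ k : Fin n,
      fpderiv n ⟨2*j.1, by omega⟩ (fpderiv n ⟨2*j.1+1, by omega⟩
        (fgen n ⟨2*k.1, by omega⟩ * (fgen n ⟨2*k.1+1, by omega⟩ * g)))
      = (fgen n ⟨2*j.1, by omega⟩ * fpderiv n ⟨2*j.1, by omega⟩ g
        + fgen n ⟨2*j.1+1, by omega⟩ * fpderiv n ⟨2*j.1+1, by omega⟩ g - g)
        + ∑ k : Fin n, fgen n ⟨2*k.1, by omega⟩ * (fgen n ⟨2*k.1+1, by omega⟩ *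
          (fpderiv n ⟨2*j.1, by omega⟩ (fpderiv n ⟨2*j.1+1, by omega⟩ g))) := by
    intro j
    have : ∀ k : Fin n,
        fpderiv n ⟨2*j.1, by omega⟩ (fpderiv n ⟨2*j.1+1, by omega⟩
          (fgen n ⟨2*k.1, by omega⟩ * (fgen n ⟨2*k.1+1, by omega⟩ * g)))
        = (if j = k then (fgen n ⟨2*k.1, by omega⟩ * fpderiv n ⟨2*k.1, by omega⟩ g
            + fgen n ⟨2*k.1+1, by omega⟩ * fpderiv n ⟨2*k.1+1, by omega⟩ g - g) else 0)
          + fgen n ⟨2*k.1, by omega⟩ * (fgen n ⟨2*k.1+1, by omega⟩ *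
            (fpderiv n ⟨2*j.1, by omega⟩ (fpderiv n ⟨2*j.1+1, by omega⟩ g))) := by
      intro k
      have := Djk j k g
      rwa [mul_assoc (fgen n ⟨2*k.1, by omega⟩)] at this
    simp_rw [this, Finset.sum_add_distrib, Finset.sum_ite_eq (Finset.univ : Finset (Fin n)) j,
      Finset.mem_univ, if_true]
  simp_rw [step]
  rw [Finset.sum_add_distrib, Finset.sum_sub_distrib]
  have euler_reindex : ∑ j : Fin n,
      (fgen n ⟨2*j.1, by omega⟩ * fpderiv n ⟨2*j.1, by omega⟩ g
        + fgen n ⟨2*j.1+1, by omega⟩ * fpderiv n ⟨2*j.1+1, by omega⟩ g)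
      = EF n g := by
    rw [EF_apply, sum_fin_two_mul n (fun i => fgen n i * fpderiv n i g)]
  have swap : ∑ j : Fin n, ∑ k : Fin n,
      fgen n ⟨2*k.1, by omega⟩ * (fgen n ⟨2*k.1+1, by omega⟩ *
        (fpderiv n ⟨2*j.1, by omega⟩ (fpderiv n ⟨2*j.1+1, by omega⟩ g)))
      = rf2 n * ∑ j : Fin n,
        fpderiv n ⟨2*j.1, by omega⟩ (fpderiv n ⟨2*j.1+1, by omega⟩ g) := by
    rw [Finset.sum_comm, rf2, Finset.sum_mul]
    congr 1
    funext k
    rw [Finset.mul_sum]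
    congr 1
    funext j
    rw [mul_assoc]
  have hrf : rf2 n * lapF n g = (4:ℝ) • (rf2 n * ∑ j : Fin n,
      fpderiv n ⟨2*j.1, by omega⟩ (fpderiv n ⟨2*j.1+1, by omega⟩ g)) := by
    rw [lapF_expand g, mul_smul_comm]
  have hcast : (n • g : Grass n) = (n : ℝ) • g := Nat.cast_smul_eq_nsmul ℝ n g |>.symm
  rw [euler_reindex, swap, Finset.sum_const, Finset.card_univ, Fintype.card_fin, hrf, hcast]
  module


lemma fpderiv_mem {n b : ℕ} (d : Fin (2*n)) (g : Grass n) (hg : g ∈ fgrade n b) :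
    fpderiv n d g ∈ fgrade n (b-1) ∧ (b = 0 → fpderiv n d g = 0) := by
  rw [fgrade] at hg
  unfold fgrade
  induction hg using Submodule.pow_induction_on_left' with
  | algebraMap r =>
    rw [fpderiv_algebraMap]
    exact ⟨Submodule.zero_mem _, fun _ => rfl⟩
  | add x y i hx hy ihx ihy =>
    exact ⟨by rw [map_add]; exact Submodule.add_mem _ ihx.1 ihy.1,
      fun h => by rw [map_add, ihx.2 h, ihy.2 h, add_zero]⟩
  | mem_mul u hu i x hx ih =>
    obtain ⟨v, rfl⟩ := hu
    have hexp : fpderiv n d (ExteriorAlgebra.ι ℝ v * x)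
        = v d • x - ExteriorAlgebra.ι ℝ v * fpderiv n d x := by
      rw [fpderiv, CliffordAlgebra.contractLeft_ι_mul]
      rfl
    refine ⟨?_, fun h => by omega⟩
    rw [hexp, show (i+1)-1 = i from rfl]
    refine Submodule.sub_mem _ (Submodule.smul_mem _ _ hx) ?_
    rcases Nat.eq_zero_or_pos i with h0 | h0
    · rw [ih.2 h0, mul_zero]
      exact Submodule.zero_mem _
    · have hm : ExteriorAlgebra.ι ℝ v * fpderiv n d x ∈
          (LinearMap.range (ExteriorAlgebra.ι ℝ (M := Fin (2*n) → ℝ)))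
          * (LinearMap.range (ExteriorAlgebra.ι ℝ (M := Fin (2*n) → ℝ)))^(i-1) :=
        Submodule.mul_mem_mul (LinearMap.mem_range_self _ v) ih.1
      rwa [← pow_succ', show (i-1)+1 = i by omega] at hm

lemma lapF_mem {n b : ℕ} (g : Grass n) (hg : g ∈ fgrade n (b+2)) :
    lapF n g ∈ fgrade n b := by
  rw [lapF_expand]
  refine Submodule.smul_mem _ _ (Submodule.sum_mem _ fun j _ => ?_)
  exact (fpderiv_mem _ _ (fpderiv_mem _ _ hg).1).1

lemma lapF_eq_zero_of_le_one {n b : ℕ} (hb : b ≤ 1) (g : Grass n) (hg : g ∈ fgrade n b) :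
    lapF n g = 0 := by
  rw [lapF_expand]
  have hz : ∀ j : Fin n,
      fpderiv n ⟨2*j.1, by omega⟩ (fpderiv n ⟨2*j.1+1, by omega⟩ g) = 0 := by
    intro j
    interval_cases b
    · rw [(fpderiv_mem _ g hg).2 rfl, map_zero]
    · exact (fpderiv_mem _ _ (fpderiv_mem _ g hg).1).2 rfl
  simp [hz]

end Helper2

namespace Helper3

lemma pderiv_homog {m a : ℕ} (j : Fin m) (p : MvPolynomial (Fin m) ℝ)
    (hp : p ∈ homogeneousSubmodule (Fin m) ℝ a) :
    pderiv j p ∈ homogeneousSubmodule (Fin m) ℝ (a-1) ∧ (a = 0 → pderiv j p = 0) := by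
  have hexp : pderiv j p = ∑ d ∈ p.support, pderiv j (monomial d (coeff d p)) := by
    conv_lhs => rw [← p.support_sum_monomial_coeff, map_sum]
  constructor
  · rw [hexp]
    refine Submodule.sum_mem _ fun d hd => ?_
    rw [pderiv_monomial]
    rcases Nat.eq_zero_or_pos (d j) with h0 | h0
    · simp [h0]
    · have hdeg : d.degree = a := by
        have := (mem_homogeneousSubmodule _ _).mp hp (mem_support_iff.mp hd)
        rw [Finsupp.degree_eq_weight_one]; exact this
      refine (mem_homogeneousSubmodule _ _).mpr (isHomogeneous_monomial _ ?_)
      have hsplit : Finsupp.single j 1 + (d - Finsupp.single j 1) = d :=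
        Helper.single_add_sub d j (by omega)
      have hdd : (Finsupp.single j (1:ℕ)).degree + (d - Finsupp.single j 1).degree
          = d.degree := by
        simp only [Finsupp.degree_eq_weight_one]
        rw [← map_add, hsplit]
      have hsingle : (Finsupp.single j (1:ℕ)).degree = 1 := by
        rw [Finsupp.degree_apply, Finsupp.support_single_ne_zero _ one_ne_zero]
        simp
      omega
  · intro h
    subst h
    rw [hexp]
    refine Finset.sum_eq_zero fun d hd => ?_
    have hdeg : d.degree = 0 := by
      have := (mem_homogeneousSubmodule _ _).mp hp (mem_support_iff.mp hd)
      rw [Finsupp.degree_eq_weight_one]; exact this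
    have hd0 : d = 0 := (Finsupp.degree_eq_zero_iff d).mp hdeg
    rw [pderiv_monomial, hd0]
    simp

lemma lapB_expand {m : ℕ} (p : MvPolynomial (Fin m) ℝ) :
    lapB m p = - ∑ j : Fin m, pderiv j (pderiv j p) := by
  simp [lapB]

lemma lapB_homog {m a : ℕ} (p : MvPolynomial (Fin m) ℝ)
    (hp : p ∈ homogeneousSubmodule (Fin m) ℝ (a+2)) :
    lapB m p ∈ homogeneousSubmodule (Fin m) ℝ a := by
  rw [lapB_expand]
  refine Submodule.neg_mem _ (Submodule.sum_mem _ fun j _ => ?_)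
  exact (pderiv_homog _ _ (pderiv_homog _ _ hp).1).1

lemma lapB_eq_zero_of_le_one {m a : ℕ} (ha : a ≤ 1) (p : MvPolynomial (Fin m) ℝ)
    (hp : p ∈ homogeneousSubmodule (Fin m) ℝ a) :
    lapB m p = 0 := by
  rw [lapB_expand]
  have hz : ∀ j : Fin m, pderiv j (pderiv j p) = 0 := by
    intro j
    interval_cases a
    · rw [(pderiv_homog j p hp).2 rfl, map_zero]
    · exact (pderiv_homog j _ (pderiv_homog j p hp).1).2 rfl
  simp [hz]

open Helper Helper2 in
lemma lap_tmul (m n : ℕ) (q : MvPolynomial (Fin m) ℝ) (h : Grass n) :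
    lap m n (q ⊗ₜ h) = (lapB m q) ⊗ₜ h + q ⊗ₜ (lapF n h) := by
  rw [lap]
  simp

open Helper Helper2 in
lemma r2_mul_tmul (m n : ℕ) (q : MvPolynomial (Fin m) ℝ) (h : Grass n) :
    r2 m n * (q ⊗ₜ h) = (rb2 m * q) ⊗ₜ h + q ⊗ₜ (rf2 n * h) := by
  rw [r2, add_mul, Algebra.TensorProduct.tmul_mul_tmul,
    Algebra.TensorProduct.tmul_mul_tmul, one_mul, one_mul]

open Helper Helper2 in
lemma key_tmul (m n a b : ℕ) (p : MvPolynomial (Fin m) ℝ) (g : Grass n)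
    (hp : p ∈ homogeneousSubmodule (Fin m) ℝ a) (hg : g ∈ fgrade n b) :
    lap m n (r2 m n * (p ⊗ₜ g)) = r2 m n * lap m n (p ⊗ₜ g)
      + ((2*(m:ℝ) + 4*(a:ℝ)) + (4*(b:ℝ) - 4*(n:ℝ))) • (p ⊗ₜ g) := by
  have h1 : lapB m (rb2 m * p) = rb2 m * lapB m p + ((2*(m:ℝ) + 4*(a:ℝ))) • p := by
    rw [commB, eulerB p hp, add_assoc]
    congr 1
    rw [smul_eq_C_mul, smul_eq_C_mul, ← mul_assoc, ← map_mul, ← add_mul, ← map_add]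
  have h2 : lapF n (rf2 n * g) = rf2 n * lapF n g + ((4*(b:ℝ) - 4*(n:ℝ))) • g := by
    rw [commF, eulerF g hg, add_sub_assoc]
    congr 1
    rw [smul_smul, ← sub_smul]
  rw [r2_mul_tmul, map_add, lap_tmul, lap_tmul, h1, h2, lap_tmul, mul_add,
    r2_mul_tmul, r2_mul_tmul]
  simp only [TensorProduct.add_tmul, TensorProduct.tmul_add, ← TensorProduct.smul_tmul',
    TensorProduct.tmul_smul]
  module

open Helper Helper2 in
lemma comm_key (m n k : ℕ) (R : SuperPoly m n) (hR : R ∈ P m n k) :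
    lap m n (r2 m n * R) = r2 m n * lap m n R + ((2*sdim m n + 4*k : ℤ) : ℝ) • R := by
  set c : ℝ := ((2*sdim m n + 4*k : ℤ) : ℝ) with hc
  set L : SuperPoly m n →ₗ[ℝ] SuperPoly m n :=
    (lap m n) ∘ₗ (LinearMap.mulLeft ℝ (r2 m n))
    - (LinearMap.mulLeft ℝ (r2 m n)) ∘ₗ (lap m n)
    - c • LinearMap.id with hL
  have happ : ∀ x : SuperPoly m n,
      L x = lap m n (r2 m n * x) - r2 m n * lap m n x - c • x := by
    intro x
    rw [hL]
    simp [LinearMap.sub_apply, LinearMap.comp_apply, LinearMap.mulLeft_apply]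
  suffices h : R ∈ LinearMap.ker L by
    have h0 := LinearMap.mem_ker.mp h
    rw [happ] at h0
    have := sub_eq_zero.mp (by rwa [sub_sub] at h0)
    rw [this]
  refine (show P m n k ≤ LinearMap.ker L from ?_) hR
  rw [P]
  refine iSup_le fun i => Submodule.map₂_le.mpr fun p hp g hg => ?_
  rw [LinearMap.mem_ker, TensorProduct.mk_apply, happ, sub_sub, sub_eq_zero]
  rw [key_tmul m n (k - i.1) i.1 p g hp hg]
  congr 2
  have hik : i.1 ≤ k := by omega
  rw [hc, sdim]
  push_cast [Nat.cast_sub hik]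
  ring

open Helper Helper2 in
lemma lap_mem (m n k : ℕ) (R : SuperPoly m n) (hR : R ∈ P m n (k+2)) :
    lap m n R ∈ P m n k := by
  refine (show P m n (k+2) ≤ (P m n k).comap (lap m n) from ?_) hR
  conv_lhs => rw [P]
  refine iSup_le fun i => Submodule.map₂_le.mpr fun p hp g hg => ?_
  rw [Submodule.mem_comap, TensorProduct.mk_apply, lap_tmul]
  refine Submodule.add_mem _ ?_ ?_
  · rcases le_or_gt i.1 k with hik | hik
    · have hp' : lapB m p ∈ homogeneousSubmodule (Fin m) ℝ (k - i.1) :=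
        lapB_homog p (by rwa [show (k+2) - i.1 = (k - i.1) + 2 by omega] at hp)
      have hmem : (TensorProduct.mk ℝ _ _) (lapB m p) g ∈
          Submodule.map₂ (TensorProduct.mk ℝ _ _)
            (homogeneousSubmodule (Fin m) ℝ (k - (⟨i.1, by omega⟩ : Fin (k+1)).1))
            (fgrade n (⟨i.1, by omega⟩ : Fin (k+1)).1) :=
        Submodule.apply_mem_map₂ _ hp' hg
      rw [P]
      exact le_iSup (fun i : Fin (k+1) => Submodule.map₂ (TensorProduct.mk ℝ _ _)
        (homogeneousSubmodule (Fin m) ℝ (k - i.1)) (fgrade n i.1)) ⟨i.1, by omega⟩ hmem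
    · have h0 : lapB m p = 0 :=
        lapB_eq_zero_of_le_one (a := (k+2) - i.1) (by omega) p hp
      rw [h0, TensorProduct.zero_tmul]
      exact Submodule.zero_mem _
  · rcases lt_or_ge i.1 2 with hi2 | hi2
    · have h0 : lapF n g = 0 := lapF_eq_zero_of_le_one (b := i.1) (by omega) g hg
      rw [h0, TensorProduct.tmul_zero]
      exact Submodule.zero_mem _
    · have hg' : lapF n g ∈ fgrade n (i.1 - 2) :=
        lapF_mem g (by rwa [show (i.1 - 2) + 2 = i.1 by omega])
      have hp' : p ∈ homogeneousSubmodule (Fin m) ℝ (k - (i.1 - 2)) := by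
        rwa [show k - (i.1 - 2) = (k+2) - i.1 by omega]
      have hmem : (TensorProduct.mk ℝ _ _) p (lapF n g) ∈
          Submodule.map₂ (TensorProduct.mk ℝ _ _)
            (homogeneousSubmodule (Fin m) ℝ (k - (⟨i.1 - 2, by omega⟩ : Fin (k+1)).1))
            (fgrade n (⟨i.1 - 2, by omega⟩ : Fin (k+1)).1) :=
        Submodule.apply_mem_map₂ _ hp' hg'
      rw [P]
      exact le_iSup (fun i : Fin (k+1) => Submodule.map₂ (TensorProduct.mk ℝ _ _)
        (homogeneousSubmodule (Fin m) ℝ (k - i.1)) (fgrade n i.1)) ⟨i.1 - 2, by omega⟩ hmem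

open Helper Helper2 in
lemma lap_zero_of_P0 (m n : ℕ) (R : SuperPoly m n) (hR : R ∈ P m n 0) :
    lap m n R = 0 := by
  refine (show P m n 0 ≤ LinearMap.ker (lap m n) from ?_) hR
  rw [P]
  refine iSup_le fun i => Submodule.map₂_le.mpr fun p hp g hg => ?_
  have hi : i.1 = 0 := by omega
  rw [hi] at hg
  rw [LinearMap.mem_ker, TensorProduct.mk_apply, lap_tmul,
    lapB_eq_zero_of_le_one (a := 0 - i.1) (by omega) p hp,
    lapF_eq_zero_of_le_one (b := 0) (by omega) g hg,
    TensorProduct.zero_tmul, TensorProduct.tmul_zero, add_zero]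

end Helper3


/-- For every integer t ≥ 0 and every R_{2t} ∈ 𝒫_{2t}, one has
Δ^{t+1}(x² R_{2t}) = 2(t+1)(M + 2t) Δ^t(R_{2t}). -/
theorem lap_pow_r2_mul (m n : ℕ) (hm : 1 ≤ m) (hn : 1 ≤ n)
    (t : ℕ) (R : SuperPoly m n) (hR : R ∈ P m n (2*t)) :
    ((lap m n)^(t+1)) (r2 m n * R) =
      ((2*((t:ℤ)+1)*(sdim m n + 2*t) : ℤ) : ℝ) • (((lap m n)^t) R) := by
  induction t generalizing R with
  | zero =>
    have h0 : R ∈ P m n 0 := by simpa using hR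
    rw [pow_one, pow_zero, Module.End.one_apply,
      Helper3.comm_key m n 0 R h0, Helper3.lap_zero_of_P0 m n R h0, mul_zero, zero_add]
    congr 1
    push_cast
    ring
  | succ t ih =>
    have hR' : R ∈ P m n (2*t+2) := by rwa [show 2*(t+1) = 2*t+2 by ring] at hR
    have hlapR : lap m n R ∈ P m n (2*t) := Helper3.lap_mem m n (2*t) R hR'
    have hps : ((lap m n)^(t+1+1)) (r2 m n * R)
        = ((lap m n)^(t+1)) (lap m n (r2 m n * R)) := by
      rw [pow_succ, Module.End.mul_apply]
    rw [hps, Helper3.comm_key m n (2*(t+1)) R hR, map_add, map_smul,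
      ih (lap m n R) hlapR]
    have hpow : ((lap m n)^t) (lap m n R) = ((lap m n)^(t+1)) R := by
      rw [pow_succ, Module.End.mul_apply]
    rw [hpow, ← add_smul]
    congr 1
    push_cast
    ring

end
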